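/- For ω > 0 define x1 = ηα(δ + v_s + b), x2(ω) = λ_o(δ + b)(λ + b) + λ_o v_s(δq + b) + ηω(δ + v_s + b) − ηα(b + δ − v_i), x3(ω) = λ_o δ p v_i + ηω(b + δ − v_i), and h_a(ω) = (−x2(ω) + √(x2(ω)² + 4x1x3(ω)))/(2x1). Then the function ω ↦ h_a(ω) is strictly monotonically increasing on (0, ∞): for 0 < ω_1 < ω_2 one has h_a(ω_1) < h_a(ω_2). -/

import Mathlib

lemma quad_root_eq (x1 x2 x3 : ℝ) (h1 : 0 < x1) (h3 : 0 < x3) :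
    x1 * ((-x2 + Real.sqrt (x2^2 + 4*x1*x3))/(2*x1))^2
      + x2 * ((-x2 + Real.sqrt (x2^2 + 4*x1*x3))/(2*x1)) - x3 = 0 := by
  have hd : (0:ℝ) ≤ x2^2 + 4*x1*x3 := by nlinarith
  have hs : Real.sqrt (x2^2 + 4*x1*x3) ^ 2 = x2^2 + 4*x1*x3 := Real.sq_sqrt hd
  have h1' : (2*x1) ≠ 0 := by positivity
  field_simp
  have hs' : Real.sqrt (x2^2 + x1*4*x3) ^ 2 = x2^2 + x1*4*x3 := by
    rw [show x1*4*x3 = 4*x1*x3 by ring]; exact hs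
  nlinarith [hs']

lemma lt_quad_root (x1 x2 x3 t : ℝ) (h1 : 0 < x1) (h3 : 0 < x3)
    (ht : x1*t^2 + x2*t - x3 < 0) :
    t < (-x2 + Real.sqrt (x2^2 + 4*x1*x3))/(2*x1) := by
  have hd : (0:ℝ) ≤ x2^2 + 4*x1*x3 := by nlinarith
  have hs : Real.sqrt (x2^2 + 4*x1*x3) ^ 2 = x2^2 + 4*x1*x3 := Real.sq_sqrt hd
  have hnn := Real.sqrt_nonneg (x2^2 + 4*x1*x3)
  rw [lt_div_iff₀ (by linarith : (0:ℝ) < 2*x1)]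
  nlinarith [sq_nonneg (2*x1*t + x2 + Real.sqrt (x2^2 + 4*x1*x3)),
    sq_nonneg (2*x1*t + x2 - Real.sqrt (x2^2 + 4*x1*x3))]

lemma quad_root_lt (x1 x2 x3 t : ℝ) (h1 : 0 < x1) (h3 : 0 < x3)
    (h0 : 0 ≤ t) (ht : 0 < x1*t^2 + x2*t - x3) :
    (-x2 + Real.sqrt (x2^2 + 4*x1*x3))/(2*x1) < t := by
  have hd : (0:ℝ) ≤ x2^2 + 4*x1*x3 := by nlinarith
  have hs : Real.sqrt (x2^2 + 4*x1*x3) ^ 2 = x2^2 + 4*x1*x3 := Real.sq_sqrt hd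
  have hnn := Real.sqrt_nonneg (x2^2 + 4*x1*x3)
  have hpos : 0 < 2*x1*t + x2 := by nlinarith [sq_nonneg t]
  rw [div_lt_iff₀ (by linarith : (0:ℝ) < 2*x1)]
  nlinarith [sq_nonneg (2*x1*t + x2 - Real.sqrt (x2^2 + 4*x1*x3))]

lemma ha_key_ineq (b lam vs p delta vi : ℝ)
    (hb : 0 < b) (hlam : 0 < lam) (hvs : 0 < vs) (hdelta : 0 < delta)
    (hp0 : 0 ≤ p) (hp1 : p ≤ 1) (hvi0 : 0 < vi) (hvib : vi < b) :
    delta * p * vi * (delta+vs+b)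
      < ((delta+b)*(lam+b) + vs*(delta*(1-p)+b)) * (b+delta-vi) := by
  have hS : (0:ℝ) < delta + vs + b := by linarith
  have hC : (0:ℝ) < b + delta - vi := by linarith
  have hMpos : 0 < (delta+b)*(lam+b) + vs*(delta*(1-p)+b) := by
    nlinarith [mul_pos (by linarith : (0:ℝ) < delta+b) (by linarith : (0:ℝ) < lam+b),
      mul_nonneg hvs.le (by nlinarith : (0:ℝ) ≤ delta*(1-p)+b)]
  have hM : b*(delta+vs+b) < (delta+b)*(lam+b) + vs*(delta*(1-p)+b) := by
    nlinarith [mul_pos hlam hdelta, mul_pos hlam hb,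
      mul_nonneg (mul_nonneg hvs.le hdelta.le) (by linarith : (0:ℝ) ≤ 1-p)]
  have hMC : b*(delta+vs+b)*delta < ((delta+b)*(lam+b) + vs*(delta*(1-p)+b)) * (b+delta-vi) :=
    calc b*(delta+vs+b)*delta
        < ((delta+b)*(lam+b) + vs*(delta*(1-p)+b)) * delta :=
          mul_lt_mul_of_pos_right hM hdelta
      _ < ((delta+b)*(lam+b) + vs*(delta*(1-p)+b)) * (b+delta-vi) :=
          mul_lt_mul_of_pos_left (by linarith) hMpos
  have hsmall : delta * p * vi * (delta+vs+b) ≤ delta * vi * (delta+vs+b) := by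
    have : delta * p * vi ≤ delta * vi := by
      nlinarith [mul_nonneg (mul_nonneg (by linarith : (0:ℝ) ≤ 1-p) hdelta.le) hvi0.le]
    exact mul_le_mul_of_nonneg_right this hS.le
  have hsmall2 : delta * vi * (delta+vs+b) < b*(delta+vs+b)*delta := by
    have h1 : delta * vi < delta * b := by nlinarith
    nlinarith [mul_lt_mul_of_pos_right h1 hS]
  linarith

set_option maxHeartbeats 800000 in
theorem ha_strictMono_in_global_awareness
    (b eta lam lamo alpha delta vs p q vi : ℝ)
    (hb : 0 < b) (heta : 0 < eta) (hlam : 0 < lam) (hlamo : 0 < lamo)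
    (halpha : 0 < alpha) (hdelta : 0 < delta) (hvs : 0 < vs)
    (hp0 : 0 ≤ p) (hp1 : p ≤ 1) (hq : q = 1 - p)
    (hvi0 : 0 < vi) (hvib : vi < b) :
    ∀ omega1 omega2 : ℝ, 0 < omega1 → omega1 < omega2 →
      (-(lamo * (delta + b) * (lam + b) + lamo * vs * (delta * q + b)
          + eta * omega1 * (delta + vs + b) - eta * alpha * (b + delta - vi))
        + Real.sqrt ((lamo * (delta + b) * (lam + b) + lamo * vs * (delta * q + b)
            + eta * omega1 * (delta + vs + b) - eta * alpha * (b + delta - vi)) ^ 2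
          + 4 * (eta * alpha * (delta + vs + b))
            * (lamo * delta * p * vi + eta * omega1 * (b + delta - vi))))
        / (2 * (eta * alpha * (delta + vs + b)))
      <
      (-(lamo * (delta + b) * (lam + b) + lamo * vs * (delta * q + b)
          + eta * omega2 * (delta + vs + b) - eta * alpha * (b + delta - vi))
        + Real.sqrt ((lamo * (delta + b) * (lam + b) + lamo * vs * (delta * q + b)
            + eta * omega2 * (delta + vs + b) - eta * alpha * (b + delta - vi)) ^ 2
          + 4 * (eta * alpha * (delta + vs + b))
            * (lamo * delta * p * vi + eta * omega2 * (b + delta - vi))))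
        / (2 * (eta * alpha * (delta + vs + b))) := by
  intro omega1 omega2 hω1 hω12
  subst hq
  set E : ℝ := eta * alpha * (delta + vs + b) with hE
  set A1 : ℝ := lamo * (delta + b) * (lam + b) + lamo * vs * (delta * (1-p) + b)
      + eta * omega1 * (delta + vs + b) - eta * alpha * (b + delta - vi) with hA1
  set A2 : ℝ := lamo * (delta + b) * (lam + b) + lamo * vs * (delta * (1-p) + b)
      + eta * omega2 * (delta + vs + b) - eta * alpha * (b + delta - vi) with hA2
  set B1 : ℝ := lamo * delta * p * vi + eta * omega1 * (b + delta - vi) with hB1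
  set B2 : ℝ := lamo * delta * p * vi + eta * omega2 * (b + delta - vi) with hB2
  clear_value E A1 A2 B1 B2
  have hC : 0 < b + delta - vi := by linarith
  have hS : 0 < delta + vs + b := by linarith
  have hEpos : 0 < E := by rw [hE]; exact mul_pos (mul_pos heta halpha) hS
  have hB1pos : 0 < B1 := by
    rw [hB1]
    have : 0 ≤ lamo * delta * p * vi :=
      mul_nonneg (mul_nonneg (mul_nonneg hlamo.le hdelta.le) hp0) hvi0.le
    nlinarith [mul_pos (mul_pos heta hω1) hC]
  have hB2pos : 0 < B2 := by
    rw [hB2]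
    have : 0 ≤ lamo * delta * p * vi :=
      mul_nonneg (mul_nonneg (mul_nonneg hlamo.le hdelta.le) hp0) hvi0.le
    nlinarith [mul_pos (mul_pos heta (by linarith : (0:ℝ) < omega2)) hC]
  -- the threshold value t* = (b+delta-vi)/(delta+vs+b)
  set t : ℝ := (b + delta - vi) / (delta + vs + b) with htdef
  clear_value t
  have htpos : 0 < t := by rw [htdef]; exact div_pos hC hS
  -- q1(t) > 0
  have hkey : 0 < E * (b+delta-vi)^2 + A1 * (b+delta-vi) * (delta+vs+b)
      - B1 * (delta+vs+b)^2 := by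
    have expand : E * (b+delta-vi)^2 + A1 * (b+delta-vi) * (delta+vs+b)
        - B1 * (delta+vs+b)^2
        = (delta+vs+b) * lamo *
            (((delta+b)*(lam+b) + vs*(delta*(1-p)+b)) * (b+delta-vi)
              - delta * p * vi * (delta+vs+b)) := by
      rw [hE, hA1, hB1]; ring
    rw [expand]
    have hfin := ha_key_ineq b lam vs p delta vi hb hlam hvs hdelta hp0 hp1 hvi0 hvib
    have : 0 < ((delta+b)*(lam+b) + vs*(delta*(1-p)+b)) * (b+delta-vi)
        - delta * p * vi * (delta+vs+b) := by linarith
    exact mul_pos (mul_pos hS hlamo) this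
  have hq1t : 0 < E * t^2 + A1 * t - B1 := by
    have heq : E * t^2 + A1 * t - B1
        = (E * (b+delta-vi)^2 + A1 * (b+delta-vi) * (delta+vs+b)
            - B1 * (delta+vs+b)^2) / (delta+vs+b)^2 := by
      rw [htdef]; field_simp
    rw [heq]
    positivity
  -- h1 < t
  have hstep1 := quad_root_lt E A1 B1 t hEpos hB1pos htpos.le hq1t
  set h1 : ℝ := (-A1 + Real.sqrt (A1^2 + 4*E*B1)) / (2*E) with hh1
  have hroot1 := quad_root_eq E A1 B1 hEpos hB1pos
  rw [← hh1] at hroot1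
  have hh1S : h1 * (delta+vs+b) < b + delta - vi := by
    rw [htdef] at hstep1
    exact (lt_div_iff₀ hS).mp hstep1
  -- q2(h1) < 0
  have hq2 : E * h1^2 + A2 * h1 - B2 < 0 := by
    have heq : E * h1^2 + A2 * h1 - B2
        = (E * h1^2 + A1 * h1 - B1)
          + eta * (omega2 - omega1) * (h1 * (delta+vs+b) - (b+delta-vi)) := by
      rw [hA1, hA2, hB1, hB2]; ring
    rw [heq, hroot1]
    have : eta * (omega2 - omega1) * (h1 * (delta+vs+b) - (b+delta-vi)) < 0 :=
      mul_neg_of_pos_of_neg (by nlinarith) (by linarith)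
    linarith
  have := lt_quad_root E A2 B2 h1 hEpos hB2pos hq2
  exact this
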